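/- Let (γ,ν): I → ℝ² × S¹ be a Legendre curve with γ(t)=(x(t),z(t)), ν(t)=(a(t),b(t)) and curvature (ℓ,β). Define the surface of revolution around the z-axis 𝐳(t,θ)=(x(t)cosθ, x(t)sinθ, z(t)) together with 𝐧ᶻ(t,θ)=(a(t)cosθ, a(t)sinθ, b(t)) and 𝐬ᶻ(t,θ)=(sinθ, −cosθ, 0). Then (𝐳,𝐧ᶻ,𝐬ᶻ) is a framed surface, and with 𝐭ᶻ = 𝐧ᶻ × 𝐬ᶻ one has 𝐳_t = −β(t)𝐭ᶻ, 𝐳_θ = −x(t)𝐬ᶻ, 𝐧ᶻ_t = −ℓ(t)𝐭ᶻ, 𝐧ᶻ_θ = −a(t)𝐬ᶻ, 𝐬ᶻ_t = 0, 𝐬ᶻ_θ = a(t)𝐧ᶻ + b(t)𝐭ᶻ; that is, its basic invariants are a₁=0, b₁=−β, a₂=−x, b₂=0, e₁=0, f₁=−ℓ, g₁=0, e₂=−a, f₂=0, g₂=b. -/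

import Mathlib

open Matrix Real

/-- For a Legendre curve `(γ, ν)` with `γ = (x, z)`, `ν = (a, b)` and
curvature `(ℓ, β)`, the surface of revolution around the z-axis
`Z(t,θ) = (x t cos θ, x t sin θ, z t)` together with `N = (a cos θ, a sin θ, b)` and
`S = (sin θ, -cos θ, 0)` is a framed surface with `T = N ×₃ S`, and its basic invariants
are `a₁ = 0, b₁ = -β, a₂ = -x, b₂ = 0, e₁ = 0, f₁ = -ℓ, g₁ = 0, e₂ = -a, f₂ = 0, g₂ = b`. -/

private lemma hasDerivAt_vec3 {f g h : ℝ → ℝ} {f' g' h' t : ℝ}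
    (hf : HasDerivAt f f' t) (hg : HasDerivAt g g' t) (hh : HasDerivAt h h' t) :
    HasDerivAt (fun s => ![f s, g s, h s]) ![f', g', h'] t := by
  apply hasDerivAt_pi.mpr
  intro i
  fin_cases i <;> simpa using ‹_›

theorem surface_of_revolution_z_axis_is_framed_surface
    (x z a b ℓ β : ℝ → ℝ)
    (hx : ContDiff ℝ (⊤ : ℕ∞) x) (hz : ContDiff ℝ (⊤ : ℕ∞) z)
    (ha : ContDiff ℝ (⊤ : ℕ∞) a) (hb : ContDiff ℝ (⊤ : ℕ∞) b)
    (hunit : ∀ t, a t ^ 2 + b t ^ 2 = 1)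
    (hdx : ∀ t, deriv x t = -(β t) * b t)
    (hdz : ∀ t, deriv z t = β t * a t)
    (hda : ∀ t, deriv a t = -(ℓ t) * b t)
    (hdb : ∀ t, deriv b t = ℓ t * a t)
    (Z N S T : ℝ → ℝ → Fin 3 → ℝ)
    (hZ : ∀ t θ, Z t θ = ![x t * cos θ, x t * sin θ, z t])
    (hN : ∀ t θ, N t θ = ![a t * cos θ, a t * sin θ, b t])
    (hS : ∀ t θ, S t θ = ![sin θ, -cos θ, 0])
    (hT : ∀ t θ, T t θ = crossProduct (N t θ) (S t θ)) :
    ∀ t θ : ℝ,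
      -- (N, S) takes values in Δ, i.e. (Z, N, S) maps into ℝ³ × Δ
      (N t θ ⬝ᵥ N t θ = 1 ∧ S t θ ⬝ᵥ S t θ = 1 ∧ N t θ ⬝ᵥ S t θ = 0) ∧
      -- (Z, N, S) is a framed surface: Z_t ⬝ N = Z_θ ⬝ N = 0
      (deriv (fun s => Z s θ) t ⬝ᵥ N t θ = 0 ∧
        deriv (fun θ' => Z t θ') θ ⬝ᵥ N t θ = 0) ∧
      -- Z_t = 0 • S + (-β) • T  (a₁ = 0, b₁ = -β)
      HasDerivAt (fun s => Z s θ) ((0 : ℝ) • S t θ + (-(β t)) • T t θ) t ∧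
      -- Z_θ = (-x) • S + 0 • T  (a₂ = -x, b₂ = 0)
      HasDerivAt (fun θ' => Z t θ') ((-(x t)) • S t θ + (0 : ℝ) • T t θ) θ ∧
      -- N_t = 0 • S + (-ℓ) • T  (e₁ = 0, f₁ = -ℓ)
      HasDerivAt (fun s => N s θ) ((0 : ℝ) • S t θ + (-(ℓ t)) • T t θ) t ∧
      -- N_θ = (-a) • S + 0 • T  (e₂ = -a, f₂ = 0)
      HasDerivAt (fun θ' => N t θ') ((-(a t)) • S t θ + (0 : ℝ) • T t θ) θ ∧
      -- S_t = -0 • N + 0 • T  (g₁ = 0)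
      HasDerivAt (fun s => S s θ) (-(0 : ℝ) • N t θ + (0 : ℝ) • T t θ) t ∧
      -- S_θ = a • N + b • T  (e₂ = -a, g₂ = b)
      HasDerivAt (fun θ' => S t θ') ((a t) • N t θ + (b t) • T t θ) θ := by
  
  intro t θ
  have hxt : HasDerivAt x (-(β t) * b t) t := by
    have h := (hx.differentiable (by simp) t).hasDerivAt
    rwa [hdx t] at h
  have hzt : HasDerivAt z (β t * a t) t := by
    have h := (hz.differentiable (by simp) t).hasDerivAt
    rwa [hdz t] at h
  have hat : HasDerivAt a (-(ℓ t) * b t) t := by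
    have h := (ha.differentiable (by simp) t).hasDerivAt
    rwa [hda t] at h
  have hbt : HasDerivAt b (ℓ t * a t) t := by
    have h := (hb.differentiable (by simp) t).hasDerivAt
    rwa [hdb t] at h
  have eT : T t θ = ![b t * cos θ, b t * sin θ, -(a t)] := by
    rw [hT, hN, hS, cross_apply]
    funext i
    fin_cases i <;> simp <;>
      first
        | ring1
        | linear_combination (-(a t)) * sin_sq_add_cos_sq θ
  have hZfun : (fun s => Z s θ) = fun s => ![x s * cos θ, x s * sin θ, z s] :=
    funext fun s => hZ s θ
  have hNfun : (fun s => N s θ) = fun s => ![a s * cos θ, a s * sin θ, b s] :=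
    funext fun s => hN s θ
  have hSfun : (fun s => S s θ) = fun _ => ![sin θ, -cos θ, (0:ℝ)] :=
    funext fun s => hS s θ
  have hZfun2 : (fun θ' => Z t θ') = fun θ' => ![x t * cos θ', x t * sin θ', z t] :=
    funext fun θ' => hZ t θ'
  have hNfun2 : (fun θ' => N t θ') = fun θ' => ![a t * cos θ', a t * sin θ', b t] :=
    funext fun θ' => hN t θ'
  have hSfun2 : (fun θ' => S t θ') = fun θ' => ![sin θ', -cos θ', (0:ℝ)] :=
    funext fun θ' => hS t θ'
  have hdZt : HasDerivAt (fun s => Z s θ) ((0 : ℝ) • S t θ + (-(β t)) • T t θ) t := by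
    rw [hZfun]
    have h := hasDerivAt_vec3 (hxt.mul_const (cos θ)) (hxt.mul_const (sin θ)) hzt
    convert h using 1
    rw [hS, eT]
    funext i; fin_cases i <;> simp <;> ring
  have hdZθ : HasDerivAt (fun θ' => Z t θ') ((-(x t)) • S t θ + (0 : ℝ) • T t θ) θ := by
    rw [hZfun2]
    have h := hasDerivAt_vec3 ((Real.hasDerivAt_cos θ).const_mul (x t))
      ((Real.hasDerivAt_sin θ).const_mul (x t)) (hasDerivAt_const θ (z t))
    convert h using 1
    rw [hS, eT]
    funext i; fin_cases i <;> simp <;> ring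
  have hdNt : HasDerivAt (fun s => N s θ) ((0 : ℝ) • S t θ + (-(ℓ t)) • T t θ) t := by
    rw [hNfun]
    have h := hasDerivAt_vec3 (hat.mul_const (cos θ)) (hat.mul_const (sin θ)) hbt
    convert h using 1
    rw [hS, eT]
    funext i; fin_cases i <;> simp <;> ring
  have hdNθ : HasDerivAt (fun θ' => N t θ') ((-(a t)) • S t θ + (0 : ℝ) • T t θ) θ := by
    rw [hNfun2]
    have h := hasDerivAt_vec3 ((Real.hasDerivAt_cos θ).const_mul (a t))
      ((Real.hasDerivAt_sin θ).const_mul (a t)) (hasDerivAt_const θ (b t))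
    convert h using 1
    rw [hS, eT]
    funext i; fin_cases i <;> simp <;> ring
  have hdSt : HasDerivAt (fun s => S s θ) (-(0 : ℝ) • N t θ + (0 : ℝ) • T t θ) t := by
    rw [hSfun]
    have h := hasDerivAt_const t (![sin θ, -cos θ, (0:ℝ)] : Fin 3 → ℝ)
    simpa using h
  have hdSθ : HasDerivAt (fun θ' => S t θ') ((a t) • N t θ + (b t) • T t θ) θ := by
    rw [hSfun2]
    have h := hasDerivAt_vec3 (Real.hasDerivAt_sin θ) (Real.hasDerivAt_cos θ).neg
      (hasDerivAt_const θ (0:ℝ))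
    convert h using 1
    · rfl
    rw [hN, eT]
    funext i
    fin_cases i <;> simp <;>
      first
        | ring1
        | linear_combination cos θ * hunit t
        | linear_combination sin θ * hunit t
  refine ⟨⟨?_, ?_, ?_⟩, ⟨?_, ?_⟩, hdZt, hdZθ, hdNt, hdNθ, hdSt, hdSθ⟩
  · rw [hN]
    simp [dotProduct, Fin.sum_univ_three]
    nlinarith [hunit t, sin_sq_add_cos_sq θ]
  · rw [hS]
    simp [dotProduct, Fin.sum_univ_three]
    nlinarith [sin_sq_add_cos_sq θ]
  · rw [hN, hS]
    simp [dotProduct, Fin.sum_univ_three]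
    ring
  · rw [hdZt.deriv, hS, eT, hN]
    simp [dotProduct, Fin.sum_univ_three]
    linear_combination (-(β t * a t * b t)) * sin_sq_add_cos_sq θ
  · rw [hdZθ.deriv, hS, eT, hN]
    simp [dotProduct, Fin.sum_univ_three]
    ring
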